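/- Assume that for every v in the range of L the set { C(x) : x ∈ E, L x = v } is bounded below in ℝ. Then the value function is quadratic: there exists a symmetric bilinear form Φ : F × F → ℝ such that Q(v) = Φ(v,v) for every v in the range of L. (Theorem 4.9, first assertion: the minimal 2-jet is quadratic in the endpoint.) -/

import Mathlib

noncomputable section
open Pointwise

private lemma additive_bounded_linear (f : ℝ → ℝ) (hadd : ∀ s t, f (s + t) = f s + f t)
    (M : ℝ) (hM : ∀ t ∈ Set.Icc (0:ℝ) 1, f t ≤ M) (t : ℝ) : f t = t * f 1 := by
  set g : ℝ → ℝ := fun s => f s - s * f 1 with hg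
  have gadd : ∀ s t, g (s + t) = g s + g t := by
    intro s t; simp only [hg]; rw [hadd]; ring
  have g0 : g 0 = 0 := by have h := gadd 0 0; rw [add_zero] at h; linarith
  have gnat : ∀ (n : ℕ) (s : ℝ), g (n * s) = n * g s := by
    intro n; induction n with
    | zero => intro s; simpa using g0
    | succ k ih => intro s; push_cast; rw [add_mul, one_mul, gadd, ih]; ring
  have g1 : g 1 = 0 := by simp [hg]
  have gM : ∀ s ∈ Set.Icc (0:ℝ) 1, g s ≤ M + |f 1| := by
    intro s hs
    have h1 := hM s hs
    have h2 : -(s * f 1) ≤ |f 1| := by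
      rcases abs_cases (f 1) with ⟨h, _⟩ | ⟨h, _⟩ <;> nlinarith [hs.1, hs.2]
    simp only [hg]; linarith
  have gint : ∀ (m : ℤ), g (m : ℝ) = 0 := by
    intro m
    have gneg : ∀ s : ℝ, g (-s) = - g s := by
      intro s; have := gadd s (-s); simp [g0] at this; linarith
    rcases le_or_gt 0 m with h | h
    · lift m to ℕ using h
      have := gnat m 1; simpa [g1] using this
    · have : g ((-m : ℤ) : ℝ) = 0 := by
        lift (-m) to ℕ using (by omega) with n hn
        have := gnat n 1; simpa [g1] using this
      push_cast at this
      rw [gneg] at this; linarith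
  have key : ∀ s : ℝ, g s ≤ 0 := by
    intro s
    by_contra h
    push_neg at h
    obtain ⟨n, hn⟩ := exists_nat_gt ((M + |f 1|) / g s)
    have hpos : (0:ℝ) < g s := h
    have hng : M + |f 1| < n * g s := by
      rw [div_lt_iff₀ hpos] at hn; linarith
    have e1 : g (n * s) = n * g s := gnat n s
    set x : ℝ := (n : ℝ) * s
    have e2 : g x = g (Int.fract x) := by
      have h2 : g (Int.fract x + (⌊x⌋ : ℝ)) = g (Int.fract x) + g (⌊x⌋ : ℝ) := gadd _ _
      rw [gint] at h2
      have h3 : Int.fract x + (⌊x⌋ : ℝ) = x := by rw [Int.fract]; ring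
      rw [h3] at h2; linarith
    have e3 : g (Int.fract x) ≤ M + |f 1| :=
      gM _ ⟨Int.fract_nonneg x, (Int.fract_lt_one x).le⟩
    rw [e2] at e1
    linarith
  have gneg : ∀ s : ℝ, g (-s) = - g s := by
    intro s; have := gadd s (-s); simp [g0] at this; linarith
  have : g t = 0 := le_antisymm (key t) (by have := key (-t); rw [gneg] at this; linarith)
  simp only [hg] at this; linarith



/-- The set of values of the quadratic cost `C(x) = B(x,x)` over the fiber
`{x : L x = v}`. Its infimum (when finite) is the value function
`Q(v)` ('minimal 2-jet'). -/
def fiberCosts {E F : Type*} [AddCommGroup E] [Module ℝ E]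
    [AddCommGroup F] [Module ℝ F]
    (L : E →ₗ[ℝ] F) (B : E →ₗ[ℝ] E →ₗ[ℝ] ℝ) (v : F) : Set ℝ :=
  { c | ∃ x : E, L x = v ∧ B x x = c }

section Aux

variable {E F : Type*} [AddCommGroup E] [Module ℝ E] [AddCommGroup F] [Module ℝ F]
variable (L : E →ₗ[ℝ] F) (B : E →ₗ[ℝ] E →ₗ[ℝ] ℝ)

/-- The value function. -/
def jetQ (v : F) : ℝ := sInf (fiberCosts L B v)

variable {L B}

lemma fc_mem {v : F} {x : E} (hx : L x = v) : B x x ∈ fiberCosts L B v := ⟨x, hx, rfl⟩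

lemma fc_nonempty {v : F} (hv : v ∈ LinearMap.range L) : (fiberCosts L B v).Nonempty := by
  obtain ⟨x, hx⟩ := hv; exact ⟨B x x, fc_mem hx⟩

lemma expand_add (hBsymm : ∀ x y : E, B x y = B y x) (x y : E) :
    B (x + y) (x + y) = B x x + 2 * B x y + B y y := by
  simp only [map_add, LinearMap.add_apply]
  rw [hBsymm y x]; ring

lemma expand_sub (hBsymm : ∀ x y : E, B x y = B y x) (x y : E) :
    B (x - y) (x - y) = B x x - 2 * B x y + B y y := by
  simp only [map_sub, LinearMap.sub_apply]
  rw [hBsymm y x]; ring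

lemma ker_nonneg (hbdd0 : BddBelow (fiberCosts L B 0)) {x : E} (hx : L x = 0) :
    0 ≤ B x x := by
  by_contra h
  push_neg at h
  obtain ⟨m, hm⟩ := hbdd0
  have hB : 0 < -(B x x) := by linarith
  set s : ℝ := (|m| + 1) / (-(B x x)) with hs_def
  have hs : 0 ≤ s := le_of_lt (by positivity)
  set t : ℝ := Real.sqrt s with ht_def
  have ht2 : t ^ 2 = s := Real.sq_sqrt hs
  have hmem : B (t • x) (t • x) ∈ fiberCosts L B 0 :=
    fc_mem (by rw [map_smul, hx, smul_zero])
  have hval : B (t • x) (t • x) = t ^ 2 * B x x := by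
    simp only [map_smul, LinearMap.smul_apply, smul_eq_mul]; ring
  have hmle := hm hmem
  rw [hval, ht2] at hmle
  have hne : B x x ≠ 0 := ne_of_lt h
  have hsv : s * B x x = -(|m| + 1) := by
    rw [hs_def]; field_simp
  rw [hsv] at hmle
  have := neg_abs_le m
  linarith

lemma jetQ_zero (hbdd0 : BddBelow (fiberCosts L B 0)) : jetQ L B 0 = 0 := by
  refine le_antisymm ?_ ?_
  · exact csInf_le hbdd0 (by simpa using fc_mem (map_zero L))
  · exact le_csInf ⟨B 0 0, fc_mem (map_zero L)⟩
      (fun c hc => by obtain ⟨x, hx, rfl⟩ := hc; exact ker_nonneg hbdd0 hx)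

lemma jetQ_smul (hbdd0 : BddBelow (fiberCosts L B 0)) (t : ℝ) (v : F) :
    jetQ L B (t • v) = t^2 * jetQ L B v := by
  rcases eq_or_ne t 0 with rfl | ht
  · simp [jetQ_zero hbdd0]
  · have hset : fiberCosts L B (t • v) = (t^2) • (fiberCosts L B v) := by
      ext c
      constructor
      · rintro ⟨z, hz, rfl⟩
        refine ⟨B (t⁻¹ • z) (t⁻¹ • z), fc_mem ?_, ?_⟩
        · rw [map_smul, hz, smul_smul, inv_mul_cancel₀ ht, one_smul]
        · simp only [map_smul, LinearMap.smul_apply, smul_eq_mul]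
          field_simp
      · rintro ⟨c, ⟨x, hx, rfl⟩, rfl⟩
        refine ⟨t • x, by rw [map_smul, hx], ?_⟩
        simp only [map_smul, LinearMap.smul_apply, smul_eq_mul]; ring
    simp only [jetQ, hset]
    rw [Real.sInf_smul_of_nonneg (by positivity)]
    simp [smul_eq_mul]


lemma jetQ_parallelogram (hBsymm : ∀ x y : E, B x y = B y x)
    (hbdd : ∀ v ∈ LinearMap.range L, BddBelow (fiberCosts L B v))
    {v w : F} (hv : v ∈ LinearMap.range L) (hw : w ∈ LinearMap.range L) :
    jetQ L B (v + w) + jetQ L B (v - w) = 2 * jetQ L B v + 2 * jetQ L B w := by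
  have hvw : v + w ∈ LinearMap.range L := add_mem hv hw
  have hvmw : v - w ∈ LinearMap.range L := sub_mem hv hw
  refine le_antisymm ?_ ?_
  · have key1 : ∀ a ∈ fiberCosts L B v, ∀ b ∈ fiberCosts L B w,
        jetQ L B (v + w) + jetQ L B (v - w) ≤ 2 * a + 2 * b := by
      rintro a ⟨p, hp, rfl⟩ b ⟨q, hq, rfl⟩
      have h1 : jetQ L B (v + w) ≤ B (p + q) (p + q) :=
        csInf_le (hbdd _ hvw) (fc_mem (by rw [map_add, hp, hq]))
      have h2 : jetQ L B (v - w) ≤ B (p - q) (p - q) :=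
        csInf_le (hbdd _ hvmw) (fc_mem (by rw [map_sub, hp, hq]))
      have e1 := expand_add hBsymm p q
      have e2 := expand_sub hBsymm p q
      linarith
    have step : ∀ a ∈ fiberCosts L B v,
        jetQ L B (v + w) + jetQ L B (v - w) ≤ 2 * a + 2 * jetQ L B w := by
      intro a ha
      have : (jetQ L B (v + w) + jetQ L B (v - w) - 2 * a) / 2 ≤ jetQ L B w :=
        le_csInf (fc_nonempty hw) (fun b hb => by have := key1 a ha b hb; linarith)
      linarith
    have : (jetQ L B (v + w) + jetQ L B (v - w) - 2 * jetQ L B w) / 2 ≤ jetQ L B v :=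
      le_csInf (fc_nonempty hv) (fun a ha => by have := step a ha; linarith)
    linarith
  · have key2 : ∀ a ∈ fiberCosts L B (v + w), ∀ b ∈ fiberCosts L B (v - w),
        2 * jetQ L B v + 2 * jetQ L B w ≤ a + b := by
      rintro a ⟨p, hp, rfl⟩ b ⟨q, hq, rfl⟩
      have hx : L ((2:ℝ)⁻¹ • (p + q)) = v := by
        rw [map_smul, map_add, hp, hq]
        have : (v + w) + (v - w) = (2:ℝ) • v := by rw [two_smul]; abel
        rw [this, smul_smul]; norm_num
      have hy : L ((2:ℝ)⁻¹ • (p - q)) = w := by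
        rw [map_smul, map_sub, hp, hq]
        have : (v + w) - (v - w) = (2:ℝ) • w := by rw [two_smul]; abel
        rw [this, smul_smul]; norm_num
      have h1 : jetQ L B v ≤ B ((2:ℝ)⁻¹ • (p + q)) ((2:ℝ)⁻¹ • (p + q)) :=
        csInf_le (hbdd _ hv) (fc_mem hx)
      have h2 : jetQ L B w ≤ B ((2:ℝ)⁻¹ • (p - q)) ((2:ℝ)⁻¹ • (p - q)) :=
        csInf_le (hbdd _ hw) (fc_mem hy)
      have c1 : B ((2:ℝ)⁻¹ • (p + q)) ((2:ℝ)⁻¹ • (p + q))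
          = (2:ℝ)⁻¹ * (2:ℝ)⁻¹ * B (p + q) (p + q) := by
        simp only [map_smul, LinearMap.smul_apply, smul_eq_mul]; ring
      have c2 : B ((2:ℝ)⁻¹ • (p - q)) ((2:ℝ)⁻¹ • (p - q))
          = (2:ℝ)⁻¹ * (2:ℝ)⁻¹ * B (p - q) (p - q) := by
        simp only [map_smul, LinearMap.smul_apply, smul_eq_mul]; ring
      have e1 := expand_add hBsymm p q
      have e2 := expand_sub hBsymm p q
      have e3 := hBsymm p q
      have e4 := hBsymm q p
      nlinarith [h1, h2]
    have step : ∀ a ∈ fiberCosts L B (v + w),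
        2 * jetQ L B v + 2 * jetQ L B w ≤ a + jetQ L B (v - w) := by
      intro a ha
      have : 2 * jetQ L B v + 2 * jetQ L B w - a ≤ jetQ L B (v - w) :=
        le_csInf (fc_nonempty hvmw) (fun b hb => by have := key2 a ha b hb; linarith)
      linarith
    have : 2 * jetQ L B v + 2 * jetQ L B w - jetQ L B (v - w) ≤ jetQ L B (v + w) :=
      le_csInf (fc_nonempty hvw) (fun a ha => by have := step a ha; linarith)
    linarith

lemma jetQ_ternary (hBsymm : ∀ x y : E, B x y = B y x)
    (hbdd : ∀ v ∈ LinearMap.range L, BddBelow (fiberCosts L B v))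
    {u v w : F} (hu : u ∈ LinearMap.range L) (hv : v ∈ LinearMap.range L)
    (hw : w ∈ LinearMap.range L) :
    jetQ L B (u + v + w) = jetQ L B (u + v) + jetQ L B (u + w) + jetQ L B (v + w)
      - jetQ L B u - jetQ L B v - jetQ L B w := by
  have A := jetQ_parallelogram hBsymm hbdd (add_mem hu hw) hv
  have Bc := jetQ_parallelogram hBsymm hbdd (add_mem hv hw) hu
  have Cc := jetQ_parallelogram hBsymm hbdd hw (sub_mem hu hv)
  have D := jetQ_parallelogram hBsymm hbdd hu hv
  rw [show u + w + v = u + v + w from by abel, show u + w - v = u + w - v from rfl] at A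
  rw [show v + w + u = u + v + w from by abel, show v + w - u = v + w - u from rfl] at Bc
  rw [show w + (u - v) = u + w - v from by abel, show w - (u - v) = v + w - u from by abel] at Cc
  linarith

variable (L B) in
/-- Polarization of the value function. -/
def polQ (a b : F) : ℝ := (jetQ L B (a + b) - jetQ L B a - jetQ L B b) / 2

variable (L B) in
lemma polQ_symm (a b : F) : polQ L B a b = polQ L B b a := by
  unfold polQ; rw [add_comm]; ring

lemma polQ_self (hbdd0 : BddBelow (fiberCosts L B 0)) (v : F) :
    polQ L B v v = jetQ L B v := by
  unfold polQ
  rw [show v + v = (2:ℝ) • v from (two_smul ℝ v).symm, jetQ_smul hbdd0]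
  ring

lemma polQ_add_left (hBsymm : ∀ x y : E, B x y = B y x)
    (hbdd : ∀ v ∈ LinearMap.range L, BddBelow (fiberCosts L B v))
    {u v w : F} (hu : u ∈ LinearMap.range L) (hv : v ∈ LinearMap.range L)
    (hw : w ∈ LinearMap.range L) :
    polQ L B (u + v) w = polQ L B u w + polQ L B v w := by
  unfold polQ
  have T := jetQ_ternary hBsymm hbdd hu hv hw
  have D := jetQ_parallelogram hBsymm hbdd hu hv
  linarith

lemma polQ_smul_left (hBsymm : ∀ x y : E, B x y = B y x)
    (hbdd : ∀ v ∈ LinearMap.range L, BddBelow (fiberCosts L B v))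
    {v w : F} (hv : v ∈ LinearMap.range L) (hw : w ∈ LinearMap.range L) (t : ℝ) :
    polQ L B (t • v) w = t * polQ L B v w := by
  have hbdd0 : BddBelow (fiberCosts L B 0) := hbdd 0 (zero_mem _)
  obtain ⟨x, hx⟩ := id hv
  obtain ⟨y, hy⟩ := id hw
  set f : ℝ → ℝ := fun t => polQ L B (t • v) w with hf
  have hadd : ∀ s t, f (s + t) = f s + f t := by
    intro s t
    simp only [hf]
    rw [add_smul]
    exact polQ_add_left hBsymm hbdd (SMulMemClass.smul_mem s hv) (SMulMemClass.smul_mem t hv) hw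
  have f1 : f 1 = polQ L B v w := by simp only [hf, one_smul]
  set M : ℝ := (|B x x| + 2 * |B x y| + |B y y| + |jetQ L B v| + |jetQ L B w|) / 2 with hM_def
  have hM : ∀ r ∈ Set.Icc (0:ℝ) 1, f r ≤ M := by
    rintro r ⟨hr0, hr1⟩
    have hr2 : r ^ 2 ≤ 1 := by nlinarith
    have hmem : L (r • x + y) = r • v + w := by rw [map_add, map_smul, hx, hy]
    have hcost : B (r • x + y) (r • x + y) = r ^ 2 * B x x + 2 * r * B x y + B y y := by
      simp only [map_add, map_smul, LinearMap.add_apply, LinearMap.smul_apply, smul_eq_mul]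
      rw [hBsymm y x]; ring
    have h1 : jetQ L B (r • v + w) ≤ r ^ 2 * B x x + 2 * r * B x y + B y y :=
      csInf_le (hbdd _ (add_mem (SMulMemClass.smul_mem r hv) hw)) (hcost ▸ fc_mem hmem)
    have h2 : jetQ L B (r • v) = r ^ 2 * jetQ L B v := jetQ_smul hbdd0 r v
    have b1 : r ^ 2 * B x x ≤ |B x x| := by
      nlinarith [le_abs_self (B x x), neg_le_abs (B x x), abs_nonneg (B x x), sq_nonneg r]
    have b2 : 2 * r * B x y ≤ 2 * |B x y| := by
      nlinarith [le_abs_self (B x y), neg_le_abs (B x y), abs_nonneg (B x y)]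
    have b3 : B y y ≤ |B y y| := le_abs_self _
    have b4 : -(r ^ 2 * jetQ L B v) ≤ |jetQ L B v| := by
      nlinarith [neg_le_abs (jetQ L B v), le_abs_self (jetQ L B v),
        abs_nonneg (jetQ L B v), sq_nonneg r]
    have b5 : -(jetQ L B w) ≤ |jetQ L B w| := neg_le_abs _
    simp only [hf, polQ]
    rw [h2, hM_def]
    linarith
  have hlin := additive_bounded_linear f hadd M hM t
  rw [f1] at hlin
  simpa only [hf] using hlin

end Aux

/-- **Theorem 4.9, first assertion.** If for every `v` in the range of `L` the
set `{ C(x) : L x = v }` is bounded below, then the value function is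
quadratic: there is a symmetric bilinear form `Φ` on `F` with
`Q(v) = Φ(v,v)` for every `v` in the range of `L`. -/
theorem minimal_two_jet_is_quadratic
    (E F : Type*) [AddCommGroup E] [Module ℝ E]
    [AddCommGroup F] [Module ℝ F] [FiniteDimensional ℝ F]
    (L : E →ₗ[ℝ] F) (B : E →ₗ[ℝ] E →ₗ[ℝ] ℝ)
    (hBsymm : ∀ x y : E, B x y = B y x)
    (hbdd : ∀ v ∈ LinearMap.range L, BddBelow (fiberCosts L B v)) :
    ∃ Φ : F →ₗ[ℝ] F →ₗ[ℝ] ℝ, (∀ v w : F, Φ v w = Φ w v) ∧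
      ∀ v ∈ LinearMap.range L, sInf (fiberCosts L B v) = Φ v v := by
  obtain ⟨S', hcompl⟩ := Submodule.exists_isCompl (LinearMap.range L)
  set π := (LinearMap.range L).linearProjOfIsCompl S' hcompl with hπ_def
  have hmem : ∀ z : LinearMap.range L, (z : F) ∈ LinearMap.range L :=
    fun z => SetLike.coe_mem z
  refine ⟨LinearMap.mk₂ ℝ (fun v w => polQ L B ((π v : F)) ((π w : F)))
      ?_ ?_ ?_ ?_, ?_, ?_⟩
  · intro m₁ m₂ n
    simp only [map_add, Submodule.coe_add]
    exact polQ_add_left hBsymm hbdd (hmem _) (hmem _) (hmem _)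
  · intro c m n
    simp only [map_smul, SetLike.val_smul, smul_eq_mul]
    exact polQ_smul_left hBsymm hbdd (hmem _) (hmem _) c
  · intro m n₁ n₂
    simp only [map_add, Submodule.coe_add]
    rw [polQ_symm L B, polQ_add_left hBsymm hbdd (hmem _) (hmem _) (hmem _),
      polQ_symm L B ((π n₁ : F)), polQ_symm L B ((π n₂ : F))]
  · intro c m n
    simp only [map_smul, SetLike.val_smul, smul_eq_mul]
    rw [polQ_symm L B, polQ_smul_left hBsymm hbdd (hmem _) (hmem _) c,
      polQ_symm L B ((π n : F))]
  · intro v w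
    simp only [LinearMap.mk₂_apply]
    exact polQ_symm L B _ _
  · intro v hv
    simp only [LinearMap.mk₂_apply]
    have hπv : ((π v : LinearMap.range L) : F) = v := by
      have : π v = ⟨v, hv⟩ :=
        Submodule.linearProjOfIsCompl_apply_left hcompl ⟨v, hv⟩
      rw [this]
    rw [hπv]
    exact (polQ_self (hbdd 0 (zero_mem _)) v).symm
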